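/- There exists a unique q ∈ (−1, 0) satisfying 2√π · Γ(1 − q/2) = 3 · Γ((1 − q)/2), where Γ denotes the Gamma function. Moreover this q is the only solution of the equation among all q < 0, since the difference quotient (log Γ((1−q)/2 + 1/2) − log Γ((1−q)/2)) / (1/2) is strictly increasing as a function of −q > 0 by strict convexity of log Γ. -/

import Mathlib

open MeasureTheory Metric Set ENNReal Filter

noncomputable section

namespace Riesz

variable {E : Type*} [MeasurableSpace E] [PseudoMetricSpace E]

/-- Borel probability measures supported on `K` (i.e. giving full mass to `K`). -/
def probOn (K : Set E) : Set (Measure E) :=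
  {μ | IsProbabilityMeasure μ ∧ μ Kᶜ = 0}

/-- The Riesz `p`-energy `∬ |x-y|^{-p} dμ dμ` of a measure `μ`, valued in `ℝ≥0∞`.
(The kernel `(dist x y)^{-p}`, computed in `ℝ≥0∞`, is `∞` on the diagonal when `p > 0`
and `0` on the diagonal when `p < 0`.) -/
def energyOf (p : ℝ) (μ : Measure E) : ℝ≥0∞ :=
  ∫⁻ z : E × E, (ENNReal.ofReal (dist z.1 z.2)) ^ (-p) ∂(μ.prod μ)

/-- The Riesz `p`-energy of a set `K`, for `p ≠ 0`: a supremum over probability measures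
on `K` when `p < 0`, an infimum when `p > 0`.  (For `K = ∅` this gives `0` when `p < 0`
and `∞` when `p > 0`.) -/
def energy (p : ℝ) (K : Set E) : ℝ≥0∞ :=
  if p < 0 then ⨆ μ ∈ probOn K, energyOf p μ
  else ⨅ μ ∈ probOn K, energyOf p μ

/-- The logarithmic energy `∬ log (1/|x-y|) dμ dμ` of a measure, as an extended real:
the positive part (with value `∞` on the diagonal) minus the negative part. -/
def logEnergyOf (μ : Measure E) : EReal :=
  ((∫⁻ z : E × E, (if dist z.1 z.2 = 0 then ⊤ else
      ENNReal.ofReal (Real.log (1 / dist z.1 z.2))) ∂(μ.prod μ) : ℝ≥0∞) : EReal)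
  - ((∫⁻ z : E × E, ENNReal.ofReal (Real.log (dist z.1 z.2)) ∂(μ.prod μ) : ℝ≥0∞) : EReal)

/-- The logarithmic energy of a set `K`: infimum over probability measures on `K`. -/
def logEnergy (K : Set E) : EReal :=
  ⨅ μ ∈ probOn K, logEnergyOf μ

/-- The Riesz `p`-capacity of a set: `V_p(K)^{-1/p}` for `p ≠ 0`, and the logarithmic
capacity `exp(-V_log(K))` for `p = 0`. -/
def cap (p : ℝ) (K : Set E) : ℝ :=
  if p = 0 then
    (if logEnergy K = ⊤ then 0 else Real.exp (-(logEnergy K).toReal))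
  else ((energy p K).toReal) ^ (-1 / p)

/-- `μ` is a `p`-equilibrium measure of `K`: a probability measure on `K` whose
`p`-energy attains the optimal `p`-energy of `K`. -/
def IsEquilibrium (p : ℝ) (K : Set E) (μ : Measure E) : Prop :=
  μ ∈ probOn K ∧ energyOf p μ = energy p K

/-- A set `Z` has inner `p`-capacity zero: every compact subset has `p`-capacity zero. -/
def InnerCapZero (p : ℝ) (Z : Set E) : Prop :=
  ∀ Z' ⊆ Z, IsCompact Z' → cap p Z' = 0

end Riesz

end

/-- There is a unique `q ∈ (-1, 0)` with `2√π·Γ(1-q/2) = 3·Γ((1-q)/2)`, and it is the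
only solution among all `q < 0`. -/

lemma auxR_strictConvex : StrictConvexOn ℝ (Set.Ioi (0:ℝ)) (fun x => Real.log (Real.Gamma x)) := by
  have h1 : ConvexOn ℝ (Set.Ioi (0:ℝ)) (fun x => Real.log (Real.Gamma (x + 1))) := by
    refine ⟨convex_Ioi 0, ?_⟩
    intro x hx y hy a b ha hb hab
    have hx1 : x + 1 ∈ Set.Ioi (0:ℝ) := by simp only [mem_Ioi] at hx ⊢; linarith
    have hy1 : y + 1 ∈ Set.Ioi (0:ℝ) := by simp only [mem_Ioi] at hy ⊢; linarith
    have h := Real.convexOn_log_Gamma.2 hx1 hy1 ha hb hab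
    simp only [smul_eq_mul, Function.comp_apply] at h ⊢
    have heq : a * (x + 1) + b * (y + 1) = a * x + b * y + 1 := by linarith
    rw [heq] at h
    exact h
  have h2 : StrictConvexOn ℝ (Set.Ioi (0:ℝ))
      (fun x => Real.log (Real.Gamma (x + 1)) - Real.log x) := by
    have hneg := strictConcaveOn_log_Ioi.neg
    have h3 := h1.add_strictConvexOn hneg
    refine h3.congr ?_
    intro x _
    simp [sub_eq_add_neg, Pi.neg_apply]
  refine h2.congr ?_
  intro x hx
  simp only [mem_Ioi] at hx
  simp only
  rw [Real.Gamma_add_one (ne_of_gt hx),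
    Real.log_mul (ne_of_gt hx) (Real.Gamma_pos_of_pos hx).ne']
  ring

lemma auxR_mono : StrictMonoOn
    (fun t : ℝ => Real.log (Real.Gamma (t + 1/2)) - Real.log (Real.Gamma t)) (Set.Ioi 0) := by
  intro x hx y hy hxy
  simp only [Set.mem_Ioi] at hx hy
  set g : ℝ → ℝ := fun t => Real.log (Real.Gamma t) with hg
  have hC := auxR_strictConvex
  have m1 : x + 1/2 ∈ Set.Ioi (0:ℝ) := by simp only [Set.mem_Ioi]; linarith
  have m2 : y + 1/2 ∈ Set.Ioi (0:ℝ) := by simp only [Set.mem_Ioi]; linarith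
  have mx : x ∈ Set.Ioi (0:ℝ) := hx
  have my : y ∈ Set.Ioi (0:ℝ) := hy
  have s1 := hC.secant_strict_mono mx m1 m2 (by intro h; linarith)
    (by intro h; linarith) (by linarith)
  have s2 := hC.convexOn.secant_mono m2 mx my (by intro h; linarith)
    (by intro h; linarith) (le_of_lt hxy)
  have d1 : (0:ℝ) < x + 1/2 - x := by linarith
  have d2 : (0:ℝ) < y + 1/2 - x := by linarith
  have d3 : (0:ℝ) < y + 1/2 - y := by linarith
  rw [div_lt_div_iff₀ d1 d2] at s1
  have s2' : (g (y + 1/2) - g x) * (y + 1/2 - y) ≤ (g (y + 1/2) - g y) * (y + 1/2 - x) := by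
    rw [show x - (y + 1/2) = -(y + 1/2 - x) by ring, show y - (y + 1/2) = -(y + 1/2 - y) by ring,
      show g x - g (y + 1/2) = -(g (y + 1/2) - g x) by ring,
      show g y - g (y + 1/2) = -(g (y + 1/2) - g y) by ring,
      neg_div_neg_eq, neg_div_neg_eq, div_le_div_iff₀ d2 d3] at s2
    exact s2
  show g (x + 1/2) - g x < g (y + 1/2) - g y
  nlinarith [s1, s2', d2, hxy]

lemma auxR_eq (r : ℝ) (hr : r < 0)
    (heq : 2 * Real.sqrt Real.pi * Real.Gamma (1 - r / 2) = 3 * Real.Gamma ((1 - r) / 2)) :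
    Real.log (Real.Gamma ((1 - r) / 2 + 1/2)) - Real.log (Real.Gamma ((1 - r) / 2))
      = Real.log 3 - Real.log (2 * Real.sqrt Real.pi) := by
  have hx : (0:ℝ) < (1 - r) / 2 := by linarith
  have h1 : (1 : ℝ) - r / 2 = (1 - r) / 2 + 1/2 := by ring
  rw [h1] at heq
  have hs : (0:ℝ) < 2 * Real.sqrt Real.pi := by positivity
  have hg1 : (0:ℝ) < Real.Gamma ((1 - r) / 2 + 1/2) := Real.Gamma_pos_of_pos (by linarith)
  have hg2 : (0:ℝ) < Real.Gamma ((1 - r) / 2) := Real.Gamma_pos_of_pos hx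
  have := congrArg Real.log heq
  rw [Real.log_mul hs.ne' hg1.ne', Real.log_mul (by norm_num) hg2.ne'] at this
  linarith

theorem statement18 :
    ∃ q : ℝ, q ∈ Set.Ioo (-1 : ℝ) 0 ∧
      2 * Real.sqrt Real.pi * Real.Gamma (1 - q / 2) = 3 * Real.Gamma ((1 - q) / 2) ∧
      ∀ q' : ℝ, q' < 0 →
        2 * Real.sqrt Real.pi * Real.Gamma (1 - q' / 2) =
          3 * Real.Gamma ((1 - q') / 2) → q' = q := by
  set F : ℝ → ℝ := fun q => 2 * Real.sqrt Real.pi * Real.Gamma (1 - q / 2)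
    - 3 * Real.Gamma ((1 - q) / 2) with hF
  have hcont : ContinuousOn F (Set.Icc (-1 : ℝ) 0) := by
    have hG : ∀ q ∈ Set.Icc (-1:ℝ) 0, ∀ c : ℝ, 0 < c → ContinuousAt Real.Gamma c := by
      intro q _ c hc
      exact (Real.differentiableAt_Gamma (fun m => by
        have : (0:ℝ) ≤ m := Nat.cast_nonneg m
        intro h; rw [h] at hc; linarith)).continuousAt
    intro q hq
    obtain ⟨hq1, hq2⟩ := hq
    apply ContinuousWithinAt.sub
    · apply ContinuousAt.continuousWithinAt
      apply ContinuousAt.mul continuousAt_const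
      exact (hG q ⟨hq1, hq2⟩ _ (by linarith)).comp
        ((continuous_const.sub (continuous_id.div_const 2)).continuousAt)
    · apply ContinuousAt.continuousWithinAt
      apply ContinuousAt.mul continuousAt_const
      exact (hG q ⟨hq1, hq2⟩ _ (by linarith)).comp
        (((continuous_const.sub continuous_id).div_const 2).continuousAt)
  have hFm1 : F (-1) = Real.pi - 3 := by
    have h32 : Real.Gamma (1 - (-1:ℝ) / 2) = Real.sqrt Real.pi / 2 := by
      rw [show (1 : ℝ) - (-1:ℝ)/2 = 1/2 + 1 by norm_num,
        Real.Gamma_add_one (by norm_num), Real.Gamma_one_half_eq]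
      ring
    have h1 : Real.Gamma ((1 - (-1:ℝ)) / 2) = 1 := by norm_num [Real.Gamma_one]
    rw [hF]
    simp only
    rw [h32, h1]
    rw [show 2 * Real.sqrt Real.pi * (Real.sqrt Real.pi / 2) =
      Real.sqrt Real.pi * Real.sqrt Real.pi by ring,
      Real.mul_self_sqrt Real.pi_pos.le]
    ring
  have hF0 : F 0 = -Real.sqrt Real.pi := by
    have h1 : Real.Gamma (1 - (0:ℝ) / 2) = 1 := by norm_num [Real.Gamma_one]
    have h12 : Real.Gamma ((1 - (0:ℝ)) / 2) = Real.sqrt Real.pi := by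
      norm_num [Real.Gamma_one_half_eq]
    rw [hF]; simp only; rw [h1, h12]; ring
  have hsub : Set.Ioo (F 0) (F (-1)) ⊆ F '' Set.Ioo (-1 : ℝ) 0 :=
    intermediate_value_Ioo' (by norm_num) hcont
  have h0mem : (0:ℝ) ∈ Set.Ioo (F 0) (F (-1)) := by
    rw [hF0, hFm1]
    constructor
    · simp [Real.sqrt_pos, Real.pi_pos]
    · linarith [Real.pi_gt_three]
  obtain ⟨q, hqmem, hqF⟩ := hsub h0mem
  refine ⟨q, hqmem, ?_, ?_⟩
  · have := hqF
    rw [hF] at this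
    simp only at this
    linarith
  · intro q' hq' heq'
    have hqlt : q < 0 := hqmem.2
    have heq : 2 * Real.sqrt Real.pi * Real.Gamma (1 - q / 2)
        = 3 * Real.Gamma ((1 - q) / 2) := by
      have := hqF; rw [hF] at this; simp only at this; linarith
    have e1 := auxR_eq q hqlt heq
    have e2 := auxR_eq q' hq' heq'
    have hmem1 : (1 - q) / 2 ∈ Set.Ioi (0:ℝ) := by
      simp only [Set.mem_Ioi]; linarith
    have hmem2 : (1 - q') / 2 ∈ Set.Ioi (0:ℝ) := by
      simp only [Set.mem_Ioi]; linarith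
    have := auxR_mono.injOn hmem2 hmem1 (by rw [e1, e2])
    linarith
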